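/- Let c ∈ ℝ and r > 0 be such that c − r > −1 and |α_i + k − c| < r for every i ∈ {1,…,p} and k ∈ {0,…,n_i−1}, and let φ : ℂ → ℂ be analytic on the closed disc {t : |t−c| ≤ r} with φ(α_i+k) ≠ 0 for all such i, k. Given complex polynomials A_1,…,A_p with deg A_i ≤ n_i − 1, there exists a unique complex polynomial q with deg q ≤ |n⃗| − 1 such that for every real x ≥ 0: ∑_{i=1}^p A_i(x) Γ(x+α_i+1) = (2πi)^{−1} ∮_{|t−c|=r} q(t) φ(t) Γ(x+t+1) / ∏_{i=1}^p (α_i − t)_{n_i} dt. -/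

import Mathlib

open Finset

/-- The Pochhammer symbol (rising factorial) `(a)_m` for a complex number `a`. -/
noncomputable def pochC (a : ℂ) (m : ℕ) : ℂ := (ascPochhammer ℂ m).eval a

open Filter Polynomial

section Aux

lemma circleIntegral_finset_sum' {ι} (s : Finset ι) (f : ι → ℂ → ℂ) {c : ℂ} {R : ℝ}
    (h : ∀ i ∈ s, CircleIntegrable (f i) c R) :
    (∮ z in C(c, R), ∑ i ∈ s, f i z) = ∑ i ∈ s, ∮ z in C(c, R), f i z := by
  simp only [circleIntegral, smul_sum]
  rw [intervalIntegral.integral_finset_sum]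
  exact fun i hi => (h i hi).out

lemma pochC_eq_prod' (a : ℂ) (m : ℕ) : (ascPochhammer ℂ m).eval a = ∏ j ∈ range m, (a + j) := by
  induction m with
  | zero => simp
  | succ k ih => rw [ascPochhammer_succ_eval, prod_range_succ, ih]


lemma gammaU1 (u s : ℝ) (hu : 0 < u) (h0 : 0 ≤ s) (h1 : s ≤ 1) :
    Real.Gamma (u + s) ≤ Real.Gamma u * u ^ s := by
  have h := Real.convexOn_log_Gamma.2 (Set.mem_Ioi.mpr hu)
    (Set.mem_Ioi.mpr (by linarith : (0:ℝ) < u + 1)) (by linarith : (0:ℝ) ≤ 1 - s) h0 (by ring)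
  simp only [smul_eq_mul, Function.comp] at h
  have e1 : (1-s)*u + s*(u+1) = u + s := by ring
  rw [e1, Real.Gamma_add_one hu.ne',
    Real.log_mul hu.ne' (Real.Gamma_pos_of_pos hu).ne'] at h
  have hgpos : 0 < Real.Gamma (u+s) := Real.Gamma_pos_of_pos (by linarith)
  calc Real.Gamma (u+s) = Real.exp (Real.log (Real.Gamma (u+s))) := (Real.exp_log hgpos).symm
    _ ≤ Real.exp (Real.log (Real.Gamma u) + s * Real.log u) := by
        apply Real.exp_le_exp.mpr; nlinarith [h]
    _ = Real.Gamma u * u ^ s := by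
        rw [Real.exp_add, Real.exp_log (Real.Gamma_pos_of_pos hu),
          Real.rpow_def_of_pos hu, mul_comm s]

lemma gammaL1 (u s : ℝ) (hu : 0 < u) (h0 : 0 ≤ s) (h1 : s ≤ 1) :
    Real.Gamma u * u * (u + s) ^ (s - 1) ≤ Real.Gamma (u + s) := by
  have hus : 0 < u + s := by linarith
  have h := Real.convexOn_log_Gamma.2 (Set.mem_Ioi.mpr hus)
    (Set.mem_Ioi.mpr (by linarith : (0:ℝ) < u + 1 + s)) h0 (by linarith : (0:ℝ) ≤ 1 - s)
    (by ring)
  simp only [smul_eq_mul, Function.comp] at h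
  have e1 : s*(u+s) + (1-s)*(u+1+s) = u + 1 := by ring
  have e2 : u + 1 + s = (u + s) + 1 := by ring
  rw [e1, e2, Real.Gamma_add_one hus.ne',
    Real.log_mul hus.ne' (Real.Gamma_pos_of_pos hus).ne',
    Real.Gamma_add_one hu.ne',
    Real.log_mul hu.ne' (Real.Gamma_pos_of_pos hu).ne'] at h
  -- h : log u + log (Γ u) ≤ s * log Γ(u+s) + (1-s) * (log (u+s) + log Γ(u+s))
  have hg : 0 < Real.Gamma (u + s) := Real.Gamma_pos_of_pos hus
  have key : Real.log u + Real.log (Real.Gamma u) ≤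
      Real.log (Real.Gamma (u+s)) + (1 - s) * Real.log (u+s) := by nlinarith [h]
  calc Real.Gamma u * u * (u+s) ^ (s-1)
      = Real.exp (Real.log u + Real.log (Real.Gamma u) + (s-1) * Real.log (u+s)) := by
        rw [Real.exp_add, Real.exp_add, Real.exp_log hu, Real.exp_log (Real.Gamma_pos_of_pos hu),
          Real.rpow_def_of_pos hus, mul_comm (s-1)]
        ring
    _ ≤ Real.exp (Real.log (Real.Gamma (u+s))) := by
        apply Real.exp_le_exp.mpr; nlinarith [key]
    _ = Real.Gamma (u+s) := Real.exp_log hg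

lemma Real.Gamma_add_nat' (u : ℝ) (hu : 0 < u) (m : ℕ) :
    Real.Gamma (u + m) = Real.Gamma u * ∏ j ∈ range m, (u + j) := by
  induction m with
  | zero => simp
  | succ k ih =>
      have e : u + (k+1:ℕ) = (u + k) + 1 := by push_cast; ring
      rw [e, Real.Gamma_add_one (by positivity), ih, prod_range_succ]; ring

lemma gammaU (s : ℝ) (hs : 0 ≤ s) :
    ∃ C > 0, ∀ᶠ u in atTop, Real.Gamma (u + s) ≤ C * (Real.Gamma u * u ^ s) := by
  set m : ℕ := ⌊s⌋₊ with hm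
  set s' : ℝ := s - m with hs'
  have h0' : 0 ≤ s' := by simpa [hs'] using Nat.floor_le hs
  have h1' : s' ≤ 1 := by
    have := (Nat.lt_floor_add_one s).le
    simp only [hs']; linarith
  refine ⟨2 ^ s, Real.rpow_pos_of_pos two_pos _, ?_⟩
  filter_upwards [eventually_ge_atTop ((m:ℝ) + 1), eventually_ge_atTop (1:ℝ)] with u hum hu1
  have hu : 0 < u := by linarith
  have hum' : (m:ℝ) ≤ u := by linarith
  have e1 : u + s = (u + m) + s' := by rw [hs']; ring
  have step1 : Real.Gamma (u + s) ≤ Real.Gamma (u + m) * (u + m) ^ s' := by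
    rw [e1]; exact gammaU1 _ _ (by positivity) h0' h1'
  have step2 : Real.Gamma (u + m) ≤ Real.Gamma u * (2*u) ^ m := by
    rw [Real.Gamma_add_nat' u hu]
    have : ∏ j ∈ range m, (u + j) ≤ ∏ _j ∈ range m, (2*u) := by
      apply prod_le_prod (fun j _ => by positivity)
      intro j hj
      have : (j:ℝ) ≤ m := by exact_mod_cast (mem_range.mp hj).le
      linarith
    rw [prod_const, card_range] at this
    exact mul_le_mul_of_nonneg_left this (Real.Gamma_pos_of_pos hu).le
  have step3 : ((u:ℝ) + m) ^ s' ≤ (2*u) ^ s' :=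
    Real.rpow_le_rpow (by positivity) (by linarith) h0'
  have hGpos : 0 < Real.Gamma (u + m) := Real.Gamma_pos_of_pos (by positivity)
  have comb : Real.Gamma (u + s) ≤ Real.Gamma u * ((2*u) ^ m * (2*u) ^ s') := by
    calc Real.Gamma (u + s) ≤ Real.Gamma (u + m) * (u + m) ^ s' := step1
      _ ≤ (Real.Gamma u * (2*u) ^ m) * (2*u) ^ s' := by
          apply mul_le_mul step2 step3 (by positivity) (by positivity)
      _ = Real.Gamma u * ((2*u) ^ m * (2*u) ^ s') := by ring
  have e2 : (2*u) ^ m * (2*u) ^ s' = 2 ^ s * u ^ s := by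
    rw [← Real.rpow_natCast (2*u) m, ← Real.rpow_add (by positivity)]
    have : (m:ℝ) + s' = s := by simp [hs']
    rw [this, Real.mul_rpow (by norm_num) hu.le]
  rw [e2] at comb
  calc Real.Gamma (u + s) ≤ Real.Gamma u * (2 ^ s * u ^ s) := comb
    _ = 2 ^ s * (Real.Gamma u * u ^ s) := by ring

lemma gammaL (s : ℝ) (hs : 0 ≤ s) :
    ∃ C > 0, ∀ᶠ u in atTop, C * (Real.Gamma u * u ^ s) ≤ Real.Gamma (u + s) := by
  set m : ℕ := ⌊s⌋₊ with hm
  set s' : ℝ := s - m with hs'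
  have h0' : 0 ≤ s' := by simpa [hs'] using Nat.floor_le hs
  have h1' : s' ≤ 1 := by
    have := (Nat.lt_floor_add_one s).le
    simp only [hs']; linarith
  refine ⟨1/2, by norm_num, ?_⟩
  filter_upwards [eventually_ge_atTop ((m:ℝ) + 1), eventually_ge_atTop (1:ℝ)] with u hum hu1
  have hu : 0 < u := by linarith
  set v : ℝ := u + m with hv
  have hvpos : 0 < v := by positivity
  have e1 : u + s = v + s' := by rw [hv, hs']; ring
  have step1 : Real.Gamma v * v * (v + s') ^ (s' - 1) ≤ Real.Gamma (u + s) := by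
    rw [e1]; exact gammaL1 _ _ hvpos h0' h1'
  have step2 : Real.Gamma u * u ^ (m:ℝ) ≤ Real.Gamma v := by
    rw [hv, Real.Gamma_add_nat' u hu, Real.rpow_natCast]
    have : (u:ℝ) ^ m = ∏ _j ∈ range m, u := by rw [prod_const, card_range]
    rw [this]
    apply mul_le_mul_of_nonneg_left _ (Real.Gamma_pos_of_pos hu).le
    apply prod_le_prod (fun j _ => hu.le)
    intro j _; have : (0:ℝ) ≤ j := Nat.cast_nonneg j; linarith
  have step3 : (2*u) ^ (s' - 1) ≤ (v + s') ^ (s' - 1) := by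
    apply Real.rpow_le_rpow_of_nonpos (by positivity) _ (by linarith)
    simp only [hv]; linarith
  have comb : Real.Gamma u * u ^ (m:ℝ) * u * (2*u) ^ (s' - 1) ≤ Real.Gamma (u + s) := by
    calc Real.Gamma u * u ^ (m:ℝ) * u * (2*u) ^ (s' - 1)
        ≤ Real.Gamma v * v * (v + s') ^ (s' - 1) := by
          have h2 : u ≤ v := by rw [hv]; linarith [(Nat.cast_nonneg m : (0:ℝ) ≤ m)]
          have h1 : Real.Gamma u * u ^ (m:ℝ) * u ≤ Real.Gamma v * v :=
            mul_le_mul step2 h2 hu.le (Real.Gamma_pos_of_pos hvpos).le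
          exact mul_le_mul h1 step3 (by positivity) (by positivity)
      _ ≤ Real.Gamma (u + s) := step1
  have h2u : (0:ℝ) < 2*u := by positivity
  have e4 : (2*u) ^ (s' - 1) = (2*u) ^ s' / (2*u) := by
    rw [Real.rpow_sub h2u, Real.rpow_one]
  have husp : u ^ s' ≤ (2*u) ^ s' := Real.rpow_le_rpow hu.le (by linarith) h0'
  have hus : u ^ s = u ^ (m:ℝ) * u ^ s' := by
    rw [← Real.rpow_add hu]; congr 1; rw [hs']; ring
  have e3 : (1/2) * (Real.Gamma u * u ^ s) ≤
      Real.Gamma u * u ^ (m:ℝ) * u * (2*u) ^ (s' - 1) := by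
    rw [e4, hus]
    have hG := (Real.Gamma_pos_of_pos hu).le
    calc (1/2) * (Real.Gamma u * (u ^ (m:ℝ) * u ^ s'))
        = Real.Gamma u * u ^ (m:ℝ) * u ^ s' / 2 := by ring
      _ ≤ Real.Gamma u * u ^ (m:ℝ) * (2*u) ^ s' / 2 := by
          gcongr
      _ = Real.Gamma u * u ^ (m:ℝ) * u * ((2*u) ^ s' / (2*u)) := by
          field_simp
          try ring
  exact e3.trans comb

lemma gamma_ratio (a b : ℝ) :
    ∃ C > 0, ∀ᶠ x in atTop, Real.Gamma (x + a) ≤ C * (Real.Gamma (x + b) * x ^ (a - b)) := by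
  set β : ℝ := min a b with hβ
  obtain ⟨C1, hC1, h1⟩ := gammaU (a - β) (by simp [hβ, min_le_left])
  obtain ⟨C2, hC2, h2⟩ := gammaL (b - β) (by simp [hβ, min_le_right])
  refine ⟨C1 / C2 * 2 ^ |a - b|, by positivity, ?_⟩
  have htend : Tendsto (fun x : ℝ => x + β) atTop atTop := tendsto_atTop_add_const_right _ β tendsto_id
  filter_upwards [htend.eventually h1, htend.eventually h2,
      eventually_ge_atTop (2 * |β| + 1), eventually_ge_atTop (1:ℝ)] with x h1x h2x hxβ hx1
  have hx0 : (0:ℝ) < x := by linarith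
  have hu0 : (0:ℝ) < x + β := by
    have := abs_nonneg β; have := neg_abs_le β; linarith
  have hux : x + β ≤ 2 * x := by have := le_abs_self β; linarith
  have hxu : x / 2 ≤ x + β := by have := neg_abs_le β; linarith
  have ea : x + a = (x + β) + (a - β) := by ring
  have eb : x + b = (x + β) + (b - β) := by ring
  rw [ea, eb]
  have hΓu : 0 < Real.Gamma (x + β) := Real.Gamma_pos_of_pos hu0
  have key : Real.Gamma ((x+β) + (a-β)) ≤
      (C1 / C2) * (Real.Gamma ((x+β) + (b-β)) * (x+β) ^ (a - b)) := by
    have h2x' : Real.Gamma (x + β) ≤ Real.Gamma ((x+β) + (b-β)) / (C2 * (x+β) ^ (b-β)) := by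
      rw [le_div_iff₀ (by positivity)]
      calc Real.Gamma (x+β) * (C2 * (x+β) ^ (b-β))
          = C2 * (Real.Gamma (x+β) * (x+β) ^ (b-β)) := by ring
        _ ≤ Real.Gamma ((x+β) + (b-β)) := h2x
    calc Real.Gamma ((x+β) + (a-β)) ≤ C1 * (Real.Gamma (x+β) * (x+β) ^ (a-β)) := h1x
      _ ≤ C1 * ((Real.Gamma ((x+β) + (b-β)) / (C2 * (x+β) ^ (b-β))) * (x+β) ^ (a-β)) := by
          gcongr
      _ = (C1 / C2) * (Real.Gamma ((x+β) + (b-β)) * ((x+β) ^ (a-β) / (x+β) ^ (b-β))) := by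
          ring
      _ = (C1 / C2) * (Real.Gamma ((x+β) + (b-β)) * (x+β) ^ (a - b)) := by
          rw [← Real.rpow_sub hu0]; ring_nf
  refine key.trans ?_
  have hpow : (x+β) ^ (a-b) ≤ 2 ^ |a-b| * x ^ (a-b) := by
    rcases le_or_gt 0 (a - b) with hab | hab
    · calc (x+β) ^ (a-b) ≤ (2*x) ^ (a-b) := Real.rpow_le_rpow hu0.le hux hab
        _ = 2 ^ (a-b) * x ^ (a-b) := Real.mul_rpow (by norm_num) hx0.le
        _ ≤ 2 ^ |a-b| * x ^ (a-b) := by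
            gcongr
            · norm_num
            · exact le_abs_self _
    · calc (x+β) ^ (a-b) ≤ (x/2) ^ (a-b) :=
            Real.rpow_le_rpow_of_nonpos (by linarith) hxu hab.le
        _ = 2 ^ (-(a-b)) * x ^ (a-b) := by
            rw [Real.div_rpow hx0.le (by norm_num), Real.rpow_neg (by norm_num),
              div_eq_mul_inv, mul_comm]
        _ ≤ 2 ^ |a-b| * x ^ (a-b) := by
            gcongr
            · norm_num
            · rw [abs_of_nonpos hab.le]
    
  calc (C1/C2) * (Real.Gamma ((x+β)+(b-β)) * (x+β) ^ (a-b))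
      ≤ (C1/C2) * (Real.Gamma ((x+β)+(b-β)) * (2 ^ |a-b| * x ^ (a-b))) := by
        gcongr
        have hb : β ≤ b := min_le_right a b
        exact (Real.Gamma_pos_of_pos (by linarith)).le
    _ = (C1/C2) * 2 ^ |a-b| * (Real.Gamma ((x+β)+(b-β)) * x ^ (a-b)) := by ring

lemma poly_tendsto (Q : Polynomial ℂ) :
    Tendsto (fun x : ℝ => Q.eval (x:ℂ) / (x:ℂ) ^ Q.natDegree) atTop (nhds Q.leadingCoeff) := by
  set d := Q.natDegree with hd
  have hfun : (fun x : ℝ => Q.eval (x:ℂ) / (x:ℂ) ^ d) =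
      fun x : ℝ => ∑ k ∈ range (d+1), Q.coeff k * (x:ℂ) ^ k / (x:ℂ) ^ d := by
    funext x
    rw [eval_eq_sum_range, Finset.sum_div]
  rw [hfun]
  have : Q.leadingCoeff = ∑ k ∈ range (d+1), if k = d then Q.leadingCoeff else 0 := by
    rw [Finset.sum_ite_eq' (range (d+1)) d (fun _ => Q.leadingCoeff)]
    simp [Finset.mem_range]
  rw [this]
  apply tendsto_finset_sum
  intro k hk
  rcases eq_or_ne k d with hkd | hkd
  · rw [if_pos hkd, hkd]
    apply Tendsto.congr' _ tendsto_const_nhds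
    filter_upwards [eventually_ge_atTop (1:ℝ)] with x hx
    have hxne : (x:ℂ) ^ d ≠ 0 := pow_ne_zero _ (by exact_mod_cast (by linarith : x ≠ 0))
    rw [mul_div_assoc, div_self hxne, mul_one, Polynomial.leadingCoeff]
  · simp only [if_neg hkd]
    have hklt : k < d := lt_of_le_of_ne (Nat.lt_succ_iff.mp (Finset.mem_range.mp hk)) hkd
    apply squeeze_zero_norm' (a := fun x : ℝ => ‖Q.coeff k‖ * x ^ ((k:ℝ) - d))
    · filter_upwards [eventually_ge_atTop (1:ℝ)] with x hx
      have hx0 : (0:ℝ) < x := by linarith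
      have : ‖Q.coeff k * (x:ℂ) ^ k / (x:ℂ) ^ d‖ = ‖Q.coeff k‖ * (x ^ k / x ^ d) := by
        rw [norm_div, norm_mul, norm_pow, norm_pow, Complex.norm_real]
        rw [Real.norm_eq_abs, abs_of_pos hx0, mul_div_assoc]
      rw [this]
      apply le_of_eq
      congr 1
      rw [← Real.rpow_natCast x k, ← Real.rpow_natCast x d, ← Real.rpow_sub hx0]
    · have : ((k:ℝ) - d) = -((d:ℝ) - k) := by ring
      rw [this]
      have hpos : (0:ℝ) < (d:ℝ) - k := by
        have : (k:ℝ) < d := by exact_mod_cast hklt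
        linarith
      simpa using (tendsto_rpow_neg_atTop hpos).const_mul ‖Q.coeff k‖

lemma gamma_indep (p : ℕ) (α : Fin p → ℝ) (hα : ∀ i, -1 < α i)
    (hαint : ∀ i j, i ≠ j → ∀ z : ℤ, α i - α j ≠ (z : ℝ))
    (P : Fin p → Polynomial ℂ)
    (h : ∀ x : ℝ, 0 ≤ x → ∑ i, (P i).eval (x:ℂ) * Complex.Gamma ((x:ℂ) + α i + 1) = 0)
    (i : Fin p) : P i = 0 := by
  by_contra hPi
  set M : Finset (Fin p) := Finset.univ.filter (fun j => P j ≠ 0) with hM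
  have hMne : M.Nonempty := ⟨i, by simp [hM, hPi]⟩
  obtain ⟨i0, hi0M, hmax⟩ := M.exists_max_image (fun j => ((P j).natDegree : ℝ) + α j) hMne
  have hPi0 : P i0 ≠ 0 := by simpa [hM] using hi0M
  set d0 := (P i0).natDegree with hd0
  set G : ℝ → ℂ := fun x => ∑ j, ((P j).eval (x:ℂ) * Complex.Gamma ((x:ℂ) + α j + 1)) /
      ((x:ℂ) ^ d0 * (Real.Gamma (x + α i0 + 1) : ℂ)) with hG
  have hG0 : Tendsto G atTop (nhds 0) := by
    apply Tendsto.congr' _ tendsto_const_nhds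
    filter_upwards [eventually_ge_atTop (0:ℝ)] with x hx
    rw [hG]
    simp only
    rw [← Finset.sum_div, h x hx, zero_div]
  -- the limit of each term
  have hterm : ∀ j, Tendsto
      (fun x : ℝ => ((P j).eval (x:ℂ) * Complex.Gamma ((x:ℂ) + α j + 1)) /
        ((x:ℂ) ^ d0 * (Real.Gamma (x + α i0 + 1) : ℂ))) atTop
      (nhds (if j = i0 then (P i0).leadingCoeff else 0)) := by
    intro j
    rcases eq_or_ne j i0 with rfl | hji0
    · rw [if_pos rfl]
      apply Tendsto.congr' _ (poly_tendsto (P j))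
      filter_upwards [eventually_ge_atTop (1:ℝ)] with x hx
      have hx0 : (0:ℝ) < x := by linarith
      have hgpos : 0 < Real.Gamma (x + α j + 1) :=
        Real.Gamma_pos_of_pos (by have := hα j; linarith)
      have hcast : ((x:ℂ) + α j + 1) = ((x + α j + 1 : ℝ) : ℂ) := by push_cast; ring
      rw [hcast, Complex.Gamma_ofReal]
      have hgne : ((Real.Gamma (x + α j + 1) : ℝ) : ℂ) ≠ 0 :=
        Complex.ofReal_ne_zero.mpr hgpos.ne'
      exact (mul_div_mul_right _ _ hgne).symm
    · rw [if_neg hji0]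
      rcases eq_or_ne (P j) 0 with hPj | hPj
      · apply Tendsto.congr' _ tendsto_const_nhds
        filter_upwards with x
        rw [hPj]
        simp
      · have hjM : j ∈ M := by simp [hM, hPj]
        -- strict inequality of exponents
        have hle := hmax j hjM
        have hlt : ((P j).natDegree : ℝ) + α j < (d0 : ℝ) + α i0 := by
          rcases lt_or_eq_of_le hle with h' | h'
          · exact h'
          · exfalso
            apply hαint j i0 hji0 ((d0 : ℤ) - (P j).natDegree)
            push_cast
            linarith
        obtain ⟨C, hC, hev⟩ := gamma_ratio (α j + 1) (α i0 + 1)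
        have hlead := (poly_tendsto (P j)).norm
        have hbound := hlead.eventually (eventually_le_nhds
          (lt_add_one ‖(P j).leadingCoeff‖))
        set B := ‖(P j).leadingCoeff‖ + 1 with hB
        have hBpos : 0 < B := by positivity
        set dj := (P j).natDegree with hdj
        apply squeeze_zero_norm'
          (a := fun x : ℝ => C * B * x ^ (((dj:ℝ) + α j) - ((d0:ℝ) + α i0)))
        · filter_upwards [hev, hbound, eventually_ge_atTop (1:ℝ)] with x hevx hbx hx1
          have hx0 : (0:ℝ) < x := by linarith
          have hg0 : 0 < Real.Gamma (x + α i0 + 1) :=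
            Real.Gamma_pos_of_pos (by have := hα i0; linarith)
          have hgj : 0 < Real.Gamma (x + α j + 1) :=
            Real.Gamma_pos_of_pos (by have := hα j; linarith)
          have hcast : ((x:ℂ) + α j + 1) = ((x + α j + 1 : ℝ) : ℂ) := by push_cast; ring
          have hnorm : ‖((P j).eval (x:ℂ) * Complex.Gamma ((x:ℂ) + α j + 1)) /
              ((x:ℂ) ^ d0 * (Real.Gamma (x + α i0 + 1) : ℂ))‖ =
              ‖(P j).eval (x:ℂ)‖ * Real.Gamma (x + α j + 1) /
                (x ^ d0 * Real.Gamma (x + α i0 + 1)) := by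
            rw [hcast, Complex.Gamma_ofReal]
            simp only [norm_div, norm_mul, norm_pow, Complex.norm_real, Real.norm_eq_abs,
              abs_of_pos hg0, abs_of_pos hgj, abs_of_pos hx0]
          rw [hnorm]
          -- bound on |P j eval|
          have hPb : ‖(P j).eval (x:ℂ)‖ ≤ B * x ^ dj := by
            have hxd : (0:ℝ) < x ^ dj := by positivity
            have := hbx
            simp only [norm_div, norm_pow, Complex.norm_real, Real.norm_eq_abs,
              abs_of_pos hx0] at this
            calc ‖(P j).eval (x:ℂ)‖ = ‖(P j).eval (x:ℂ)‖ / x ^ dj * x ^ dj := by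
                  field_simp
              _ ≤ B * x ^ dj := by
                  apply mul_le_mul_of_nonneg_right _ hxd.le
                  exact this
          -- gamma bound: Γ(x+αj+1) ≤ C * Γ(x+αi0+1) * x^(αj - αi0)
          have hgb : Real.Gamma (x + α j + 1) ≤
              C * (Real.Gamma (x + α i0 + 1) * x ^ (α j - α i0)) := by
            have h2 := hevx
            have e1 : x + (α j + 1) = x + α j + 1 := by ring
            have e2 : x + (α i0 + 1) = x + α i0 + 1 := by ring
            have e3 : α j + 1 - (α i0 + 1) = α j - α i0 := by ring
            rw [e1, e2, e3] at h2
            exact h2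
          calc ‖(P j).eval (x:ℂ)‖ * Real.Gamma (x + α j + 1) /
                (x ^ d0 * Real.Gamma (x + α i0 + 1))
              ≤ (B * x ^ dj) * (C * (Real.Gamma (x + α i0 + 1) * x ^ (α j - α i0))) /
                (x ^ d0 * Real.Gamma (x + α i0 + 1)) := by
                gcongr ?_ / _
                exact mul_le_mul hPb hgb hgj.le (by positivity)
            _ = C * B * (x ^ dj * x ^ (α j - α i0) / x ^ d0) := by
                rw [div_eq_iff (by positivity : (x:ℝ) ^ d0 * Real.Gamma (x + α i0 + 1) ≠ 0)]
                field_simp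
            _ = C * B * x ^ (((dj:ℝ) + α j) - ((d0:ℝ) + α i0)) := by
                rw [← Real.rpow_natCast x dj, ← Real.rpow_natCast x d0, ← Real.rpow_add hx0,
                  ← Real.rpow_sub hx0]
                congr 2
                ring
        · have hneg : (((dj:ℝ) + α j) - ((d0:ℝ) + α i0)) < 0 := by linarith
          have := (tendsto_rpow_neg_atTop (by linarith : (0:ℝ) < -((((dj:ℝ) + α j) - ((d0:ℝ) + α i0))))).const_mul (C * B)
          simpa using this
  have hGlim : Tendsto G atTop (nhds ((P i0).leadingCoeff)) := by
    have := tendsto_finset_sum Finset.univ (fun j _ => hterm j)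
    rw [hG]
    convert this using 2
    rw [Finset.sum_ite_eq' Finset.univ i0 (fun _ => (P i0).leadingCoeff)]
    simp
  have : (P i0).leadingCoeff = 0 := tendsto_nhds_unique hGlim hG0
  exact hPi0 (leadingCoeff_eq_zero.mp this)

lemma exists_expansion (p : ℕ → Polynomial ℂ) (hmon : ∀ k, (p k).Monic)
    (hdeg : ∀ k, (p k).natDegree = k) :
    ∀ n : ℕ, ∀ A : Polynomial ℂ, A.degree < (n : WithBot ℕ) → ∃ c : ℕ → ℂ,
      A = ∑ k ∈ range n, Polynomial.C (c k) * p k := by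
  intro n
  induction n with
  | zero =>
      intro A hA
      refine ⟨0, ?_⟩
      simp only [range_zero, sum_empty]
      exact degree_eq_bot.mp (by simpa using hA) |>.symm ▸ rfl
  | succ n ih =>
      intro A hA
      set A' := A - Polynomial.C (A.coeff n) * p n with hA'
      have hdegA' : A'.degree < n := by
        rw [Polynomial.degree_lt_iff_coeff_zero]
        intro m hm
        have hmn : n ≤ m := by exact_mod_cast hm
        rw [hA', Polynomial.coeff_sub, Polynomial.coeff_C_mul]
        rcases eq_or_lt_of_le hmn with heq | hlt
        · have hpm : (p n).coeff m = 1 := by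
            rw [← heq]
            have h2 := (hmon n).leadingCoeff
            rwa [Polynomial.leadingCoeff, hdeg n] at h2
          rw [hpm, mul_one, ← heq, sub_self]
        · have h1 : A.coeff m = 0 := by
            apply Polynomial.coeff_eq_zero_of_degree_lt
            exact lt_of_lt_of_le hA (by exact_mod_cast Nat.succ_le_of_lt hlt)
          have h2 : (p n).coeff m = 0 := by
            apply Polynomial.coeff_eq_zero_of_natDegree_lt
            rw [hdeg n]; exact hlt
          rw [h1, h2, mul_zero, sub_self]
      obtain ⟨c', hc'⟩ := ih A' hdegA'
      refine ⟨Function.update c' n (A.coeff n), ?_⟩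
      rw [Finset.sum_range_succ, Function.update_self]
      have : ∑ k ∈ range n, Polynomial.C (Function.update c' n (A.coeff n) k) * p k
          = ∑ k ∈ range n, Polynomial.C (c' k) * p k :=
        Finset.sum_congr rfl fun k hk => by
          rw [Function.update_of_ne (Nat.ne_of_lt (mem_range.mp hk))]
      rw [this, ← hc', hA']
      ring

lemma expansion_unique (p : ℕ → Polynomial ℂ) (hmon : ∀ k, (p k).Monic)
    (hdeg : ∀ k, (p k).natDegree = k) :
    ∀ n (c : ℕ → ℂ), ∑ k ∈ range n, Polynomial.C (c k) * p k = 0 → ∀ k < n, c k = 0 := by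
  intro n
  induction n with
  | zero => intro c _ k hk; omega
  | succ n ih =>
      intro c hsum k hk
      have hcn : c n = 0 := by
        have := congrArg (fun q => Polynomial.coeff q n) hsum
        simp only [Polynomial.finset_sum_coeff, Polynomial.coeff_zero] at this
        rw [Finset.sum_range_succ] at this
        have hz : ∀ m ∈ range n, (Polynomial.C (c m) * p m).coeff n = 0 := by
          intro m hm
          rw [Polynomial.coeff_C_mul, Polynomial.coeff_eq_zero_of_natDegree_lt, mul_zero]
          rw [hdeg m]; exact mem_range.mp hm
        rw [Finset.sum_eq_zero hz, zero_add, Polynomial.coeff_C_mul] at this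
        have hpn : (p n).coeff n = 1 := by
          have h2 := (hmon n).leadingCoeff
          rwa [Polynomial.leadingCoeff, hdeg n] at h2
        rw [hpn, mul_one] at this
        exact this
      rcases Nat.lt_succ_iff_lt_or_eq.mp hk with h' | rfl
      · apply ih (fun m => c m)
        · rw [Finset.sum_range_succ, hcn] at hsum
          simpa using hsum
        · exact h'
      · exact hcn


end Aux

/-- Any discrete type I linear form `∑ A_i(x) Γ(x+α_i+1)` has a unique contour-integral
representation `(2πi)⁻¹ ∮ q(t) φ(t) Γ(x+t+1) / ∏ (α_i − t)_{n_i} dt` with `deg q ≤ |n|−1`. -/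
theorem discrete_typeI_contour_representation
    (p : ℕ) (hp : 0 < p) (n : Fin p → ℕ) (hn : ∀ i, 0 < n i)
    (S : ℕ) (hS : S = ∑ i, n i)
    (α : Fin p → ℝ) (hα : ∀ i, -1 < α i)
    (hαint : ∀ i j, i ≠ j → ∀ z : ℤ, α i - α j ≠ (z : ℝ))
    (c r : ℝ) (hr : 0 < r) (hcr : -1 < c - r)
    (henc : ∀ i, ∀ k < n i, |α i + k - c| < r)
    (φ : ℂ → ℂ)
    (hφ : AnalyticOnNhd ℂ φ (Metric.closedBall (c : ℂ) r))
    (hφne : ∀ i, ∀ k < n i, φ ((α i : ℂ) + k) ≠ 0)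
    (A : Fin p → Polynomial ℂ) (hA : ∀ i, (A i).natDegree ≤ n i - 1) :
    ∃! q : Polynomial ℂ, q.natDegree ≤ S - 1 ∧
      ∀ x : ℝ, 0 ≤ x →
        ∑ i, (A i).eval (x : ℂ) * Complex.Gamma ((x : ℂ) + α i + 1) =
          (2 * Real.pi * Complex.I)⁻¹ *
            circleIntegral
              (fun t : ℂ => q.eval t * φ t * Complex.Gamma ((x : ℂ) + t + 1) /
                ∏ i, pochC ((α i : ℂ) - t) (n i))
              (c : ℂ) r := by
  classical
  set T : Finset ((_ : Fin p) × ℕ) := Finset.univ.sigma (fun i => Finset.range (n i)) with hT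
  set z : (_ : Fin p) × ℕ → ℂ := fun σ => (α σ.1 : ℂ) + σ.2 with hz
  have hmemT : ∀ σ, σ ∈ T ↔ σ.2 < n σ.1 := by
    intro σ; simp [hT, Finset.mem_sigma]
  have hcardT : T.card = S := by
    rw [hT, Finset.card_sigma, hS]; simp
  have hzinj : Set.InjOn z T := by
    intro σ hσ τ hτ heq
    have h1 : (α σ.1 : ℝ) + σ.2 = (α τ.1 : ℝ) + τ.2 := by
      have := congrArg Complex.re heq
      simpa [hz] using this
    rcases eq_or_ne σ.1 τ.1 with h' | h'
    · have : (σ.2 : ℝ) = τ.2 := by rw [h'] at h1; linarith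
      have h2 : σ.2 = τ.2 := by exact_mod_cast this
      exact Sigma.ext h' (by rw [h2])
    · exfalso
      exact hαint σ.1 τ.1 h' ((τ.2 : ℤ) - σ.2) (by push_cast; linarith)
  have hzball : ∀ σ ∈ T, z σ ∈ Metric.ball (c : ℂ) r := by
    intro σ hσ
    rw [Metric.mem_ball, Complex.dist_eq, hz]
    have : (α σ.1 : ℂ) + σ.2 - c = ((α σ.1 + σ.2 - c : ℝ) : ℂ) := by push_cast; ring
    rw [this, Complex.norm_real, Real.norm_eq_abs]
    exact henc σ.1 σ.2 ((hmemT σ).mp hσ)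
  have hzsph : ∀ σ ∈ T, ∀ t ∈ Metric.sphere (c : ℂ) r, t ≠ z σ := by
    intro σ hσ t ht heq
    have h1 := hzball σ hσ
    rw [← heq] at h1
    rw [Metric.mem_sphere] at ht
    rw [Metric.mem_ball, ht] at h1
    exact lt_irrefl _ h1
  set W : (_ : Fin p) × ℕ → ℂ := fun σ => (∏ τ ∈ T.erase σ, (z σ - z τ))⁻¹ with hW
  have hWne : ∀ σ ∈ T, W σ ≠ 0 := by
    intro σ hσ
    rw [hW]
    apply inv_ne_zero
    apply Finset.prod_ne_zero_iff.mpr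
    intro τ hτ
    rw [sub_ne_zero]
    intro heq
    exact (Finset.mem_erase.mp hτ).1.symm (hzinj hσ (Finset.mem_of_mem_erase hτ) heq)
  -- denominator
  have hD : ∀ t : ℂ, (∏ i, pochC ((α i : ℂ) - t) (n i)) = (-1 : ℂ)^S * ∏ σ ∈ T, (t - z σ) := by
    intro t
    have h1 : ∀ i, pochC ((α i : ℂ) - t) (n i) = ∏ k ∈ range (n i), (z ⟨i, k⟩ - t) := by
      intro i
      rw [pochC, pochC_eq_prod']
      exact Finset.prod_congr rfl fun k _ => by rw [hz]; ring
    calc (∏ i, pochC ((α i : ℂ) - t) (n i)) = ∏ σ ∈ T, (z σ - t) := by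
          rw [hT, Finset.prod_sigma]
          exact Finset.prod_congr rfl fun i _ => (h1 i).symm ▸ rfl
      _ = ∏ σ ∈ T, (-1 : ℂ) * (t - z σ) := Finset.prod_congr rfl fun σ _ => by ring
      _ = (-1 : ℂ)^S * ∏ σ ∈ T, (t - z σ) := by
          rw [Finset.prod_mul_distrib, Finset.prod_const, hcardT]
  have hNe : ∀ t ∈ Metric.sphere (c : ℂ) r, (∏ σ ∈ T, (t - z σ)) ≠ 0 := by
    intro t ht
    apply Finset.prod_ne_zero_iff.mpr
    intro σ hσ
    exact sub_ne_zero.mpr (hzsph σ hσ t ht)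
  -- partial fractions
  have hPF : ∀ t : ℂ, (∀ σ ∈ T, t ≠ z σ) →
      (∏ σ ∈ T, (t - z σ))⁻¹ = ∑ σ ∈ T, W σ * (t - z σ)⁻¹ := by
    intro t ht
    have hTne : T.Nonempty := by
      refine ⟨⟨⟨0, hp⟩, 0⟩, ?_⟩
      rw [hmemT]; exact hn _
    have hone := Lagrange.sum_basis hzinj hTne
    have heval := congrArg (Polynomial.eval t) hone
    rw [Polynomial.eval_finset_sum, Polynomial.eval_one] at heval
    have hbasis : ∀ σ ∈ T, (Lagrange.basis T z σ).eval t =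
        W σ * ((t - z σ)⁻¹ * ∏ τ ∈ T, (t - z τ)) := by
      intro σ hσ
      rw [Lagrange.basis, Polynomial.eval_prod]
      have : ∀ τ ∈ T.erase σ, (Lagrange.basisDivisor (z σ) (z τ)).eval t =
          (z σ - z τ)⁻¹ * (t - z τ) := by
        intro τ _
        rw [Lagrange.basisDivisor, Polynomial.eval_mul, Polynomial.eval_C,
          Polynomial.eval_sub, Polynomial.eval_X, Polynomial.eval_C]
      rw [Finset.prod_congr rfl this, Finset.prod_mul_distrib]
      have h2 : ∏ τ ∈ T.erase σ, (t - z τ) = (t - z σ)⁻¹ * ∏ τ ∈ T, (t - z τ) := by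
        rw [← Finset.mul_prod_erase T _ hσ, inv_mul_cancel_left₀ (sub_ne_zero.mpr (ht σ hσ))]
      rw [h2, Finset.prod_inv_distrib]
    rw [Finset.sum_congr rfl hbasis] at heval
    have hsum : (∑ σ ∈ T, W σ * (t - z σ)⁻¹) * (∏ σ ∈ T, (t - z σ)) = 1 := by
      rw [Finset.sum_mul]
      rw [← heval]
      exact Finset.sum_congr rfl fun σ _ => by ring
    exact (eq_inv_of_mul_eq_one_left hsum).symm
  have h2πI : (2 * Real.pi * Complex.I : ℂ) ≠ 0 :=
    mul_ne_zero (mul_ne_zero two_ne_zero (Complex.ofReal_ne_zero.mpr Real.pi_ne_zero))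
      Complex.I_ne_zero
  set w : (_ : Fin p) × ℕ → ℂ := fun σ => (-1 : ℂ)^S * W σ * φ (z σ) with hw
  have hres : ∀ (qq : Polynomial ℂ) (x : ℝ), 0 ≤ x →
      (2 * Real.pi * Complex.I)⁻¹ *
        circleIntegral
          (fun t : ℂ => qq.eval t * φ t * Complex.Gamma ((x : ℂ) + t + 1) /
            ∏ i, pochC ((α i : ℂ) - t) (n i)) (c : ℂ) r
      = ∑ σ ∈ T, qq.eval (z σ) * w σ * Complex.Gamma ((x : ℂ) + z σ + 1) := by
    intro qq x hx
    set H : ℂ → ℂ := fun t => qq.eval t * φ t * Complex.Gamma ((x : ℂ) + t + 1) with hH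
    have hHdiff : ∀ t ∈ Metric.closedBall (c : ℂ) r, DifferentiableAt ℂ H t := by
      intro t ht
      have htre : c - r ≤ t.re := by
        have h1 := Complex.abs_re_le_norm (t - (c : ℂ))
        rw [Complex.sub_re, Complex.ofReal_re] at h1
        have h2 : ‖t - c‖ ≤ r := by
          simpa [Metric.mem_closedBall, Complex.dist_eq] using ht
        have h3 := abs_le.mp (h1.trans h2)
        linarith [h3.1]
      have hne : ∀ m : ℕ, (x : ℂ) + t + 1 ≠ -(m : ℂ) := by
        intro m hm
        have := congrArg Complex.re hm
        simp only [Complex.add_re, Complex.ofReal_re, Complex.one_re, Complex.neg_re,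
          Complex.natCast_re] at this
        have hm0 : (0:ℝ) ≤ m := Nat.cast_nonneg m
        linarith
      have hgam : DifferentiableAt ℂ (fun s : ℂ => Complex.Gamma ((x : ℂ) + s + 1)) t := by
        have hinner : DifferentiableAt ℂ (fun s : ℂ => (x : ℂ) + s + 1) t := by fun_prop
        exact (Complex.differentiableAt_Gamma _ hne).comp t hinner
      exact ((qq.differentiableAt).mul (hφ t ht).differentiableAt).mul hgam
    have hHcont : ContinuousOn H (Metric.closedBall (c : ℂ) r) := fun t ht =>
      (hHdiff t ht).continuousAt.continuousWithinAt
    have hHsph : ContinuousOn H (Metric.sphere (c : ℂ) r) :=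
      hHcont.mono Metric.sphere_subset_closedBall
    have hEq : Set.EqOn
        (fun t : ℂ => qq.eval t * φ t * Complex.Gamma ((x : ℂ) + t + 1) /
          ∏ i, pochC ((α i : ℂ) - t) (n i))
        (fun t : ℂ => ∑ σ ∈ T, ((-1 : ℂ)^S * W σ) * ((t - z σ)⁻¹ * H t))
        (Metric.sphere (c : ℂ) r) := by
      intro t ht
      simp only
      rw [hD t, div_eq_mul_inv, mul_inv]
      have hinv : ((-1 : ℂ)^S)⁻¹ = (-1 : ℂ)^S := by
        rw [← inv_pow, inv_neg, inv_one]
      rw [hinv, hPF t (fun σ hσ => hzsph σ hσ t ht), Finset.mul_sum, Finset.mul_sum]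
      simp only [hH]
      exact Finset.sum_congr rfl fun σ _ => by ring
    have hInt : ∀ σ ∈ T, CircleIntegrable
        (fun t : ℂ => ((-1 : ℂ)^S * W σ) * ((t - z σ)⁻¹ * H t)) (c : ℂ) r := by
      intro σ hσ
      apply ContinuousOn.circleIntegrable hr.le
      apply ContinuousOn.mul continuousOn_const
      apply ContinuousOn.mul _ hHsph
      apply ContinuousOn.inv₀ (by fun_prop)
      intro t ht
      exact sub_ne_zero.mpr (hzsph σ hσ t ht)
    rw [circleIntegral.integral_congr hr.le hEq, circleIntegral_finset_sum' T _ hInt]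
    have hterm : ∀ σ ∈ T, (∮ t in C((c : ℂ), r), ((-1 : ℂ)^S * W σ) * ((t - z σ)⁻¹ * H t))
        = ((-1 : ℂ)^S * W σ) * (2 * Real.pi * Complex.I * H (z σ)) := by
      intro σ hσ
      rw [circleIntegral.integral_const_mul]
      congr 1
      have := Complex.circleIntegral_sub_inv_smul_of_differentiable_on_off_countable
        (Set.countable_empty) (hzball σ hσ) hHcont
        (fun t ht => hHdiff t (Metric.ball_subset_closedBall ht.1))
      simpa [smul_eq_mul] using this
    rw [Finset.sum_congr rfl hterm]
    rw [Finset.mul_sum]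
    apply Finset.sum_congr rfl
    intro σ hσ
    rw [hw, hH]
    simp only
    field_simp
  -- Gamma shift lemma
  have hGamma_add : ∀ (s : ℂ), (∀ j : ℕ, s + j ≠ 0) → ∀ k : ℕ,
      Complex.Gamma (s + k) = Complex.Gamma s * (ascPochhammer ℂ k).eval s := by
    intro s hs k
    induction k with
    | zero => simp
    | succ k ih =>
        have e : s + ((k:ℕ) + 1 : ℕ) = (s + k) + 1 := by push_cast; ring
        rw [e, Complex.Gamma_add_one _ (hs k), ih, ascPochhammer_succ_eval]
        ring
  have hshift : ∀ (x : ℝ), 0 ≤ x → ∀ σ ∈ T,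
      Complex.Gamma ((x : ℂ) + z σ + 1) =
        Complex.Gamma ((x : ℂ) + α σ.1 + 1) *
          (ascPochhammer ℂ σ.2).eval ((x : ℂ) + α σ.1 + 1) := by
    intro x hx σ hσ
    have hs : ∀ j : ℕ, ((x : ℂ) + α σ.1 + 1) + j ≠ 0 := by
      intro j hj
      have := congrArg Complex.re hj
      simp only [Complex.add_re, Complex.ofReal_re, Complex.one_re, Complex.natCast_re,
        Complex.zero_re] at this
      have h1 := hα σ.1
      have h2 : (0:ℝ) ≤ j := Nat.cast_nonneg j
      linarith
    have e : (x : ℂ) + z σ + 1 = ((x : ℂ) + α σ.1 + 1) + σ.2 := by rw [hz]; push_cast; ring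
    rw [e, hGamma_add _ hs σ.2]
  -- the pch basis
  set pch : Fin p → ℕ → Polynomial ℂ := fun i k =>
    (ascPochhammer ℂ k).comp (Polynomial.X + Polynomial.C ((α i : ℂ) + 1)) with hpch
  have hpchmon : ∀ i k, (pch i k).Monic := fun i k =>
    Polynomial.Monic.comp_X_add_C (monic_ascPochhammer ℂ k) _
  have hpchdeg : ∀ i k, (pch i k).natDegree = k := by
    intro i k
    rw [hpch]
    rw [Polynomial.natDegree_comp, ascPochhammer_natDegree, Polynomial.natDegree_X_add_C,
      mul_one]
  have hpcheval : ∀ i k (t : ℂ),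
      (pch i k).eval t = (ascPochhammer ℂ k).eval (t + α i + 1) := by
    intro i k t
    rw [hpch]
    simp only [Polynomial.eval_comp, Polynomial.eval_add, Polynomial.eval_X, Polynomial.eval_C]
    congr 1
    ring
  -- the B-polynomials
  set B : Polynomial ℂ → Fin p → Polynomial ℂ := fun qq i =>
    ∑ k ∈ range (n i), Polynomial.C (qq.eval (z ⟨i, k⟩) * w ⟨i, k⟩) * pch i k with hB
  have hRT : ∀ (qq : Polynomial ℂ) (x : ℝ), 0 ≤ x →
      ∑ σ ∈ T, qq.eval (z σ) * w σ * Complex.Gamma ((x : ℂ) + z σ + 1) =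
      ∑ i, (B qq i).eval (x : ℂ) * Complex.Gamma ((x : ℂ) + α i + 1) := by
    intro qq x hx
    rw [Finset.sum_congr rfl (fun σ hσ => by rw [hshift x hx σ hσ])]
    rw [hT, Finset.sum_sigma]
    apply Finset.sum_congr rfl
    intro i _
    rw [hB]
    simp only [Polynomial.eval_finset_sum, Polynomial.eval_mul, Polynomial.eval_C,
      Finset.sum_mul]
    apply Finset.sum_congr rfl
    intro k _
    rw [hpcheval]
    ring
  -- main equivalence between the integral identity and polynomial identities
  have hmainiff : ∀ qq : Polynomial ℂ,
      (∀ x : ℝ, 0 ≤ x →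
        ∑ i, (A i).eval (x : ℂ) * Complex.Gamma ((x : ℂ) + α i + 1) =
          (2 * Real.pi * Complex.I)⁻¹ *
            circleIntegral
              (fun t : ℂ => qq.eval t * φ t * Complex.Gamma ((x : ℂ) + t + 1) /
                ∏ i, pochC ((α i : ℂ) - t) (n i))
              (c : ℂ) r)
      ↔ ∀ i, A i = B qq i := by
    intro qq
    constructor
    · intro hq i
      have h0 : ∀ x : ℝ, 0 ≤ x →
          ∑ j, (A j - B qq j).eval (x : ℂ) * Complex.Gamma ((x : ℂ) + α j + 1) = 0 := by
        intro x hx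
        have h1 := hq x hx
        rw [hres qq x hx, hRT qq x hx] at h1
        simp only [Polynomial.eval_sub, sub_mul]
        rw [Finset.sum_sub_distrib, ← h1, sub_self]
      exact sub_eq_zero.mp (gamma_indep p α hα hαint (fun j => A j - B qq j) h0 i)
    · intro hq x hx
      rw [hres qq x hx, hRT qq x hx]
      exact Finset.sum_congr rfl fun i _ => by rw [hq i]
  -- expansions of the A i in the Pochhammer basis
  have hAdeg : ∀ i, (A i).degree < ((n i : ℕ) : WithBot ℕ) := by
    intro i
    rcases eq_or_ne (A i) 0 with h | h
    · rw [h, Polynomial.degree_zero]; exact WithBot.bot_lt_coe _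
    · rw [Polynomial.degree_eq_natDegree h]
      exact_mod_cast lt_of_le_of_lt (hA i) (Nat.sub_lt (hn i) one_pos)
  choose cA hcA using fun i => exists_expansion (pch i) (hpchmon i) (hpchdeg i) (n i) (A i) (hAdeg i)
  have hwne : ∀ σ ∈ T, w σ ≠ 0 := by
    intro σ hσ
    rw [hw]
    refine mul_ne_zero (mul_ne_zero (pow_ne_zero _ (neg_ne_zero.mpr one_ne_zero)) (hWne σ hσ)) ?_
    rw [hz]
    exact hφne σ.1 σ.2 ((hmemT σ).mp hσ)
  set v : (_ : Fin p) × ℕ → ℂ := fun σ => cA σ.1 σ.2 / w σ with hv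
  have hvaliff : ∀ qq : Polynomial ℂ,
      (∀ i, A i = B qq i) ↔ (∀ σ ∈ T, qq.eval (z σ) = v σ) := by
    intro qq
    constructor
    · intro hq σ hσ
      have hσ2 := (hmemT σ).mp hσ
      have hABi := hq σ.1
      have h1 : ∑ k ∈ range (n σ.1),
          Polynomial.C (cA σ.1 k - qq.eval (z ⟨σ.1, k⟩) * w ⟨σ.1, k⟩) * pch σ.1 k = 0 := by
        have e : ∑ k ∈ range (n σ.1),
            Polynomial.C (cA σ.1 k - qq.eval (z ⟨σ.1, k⟩) * w ⟨σ.1, k⟩) * pch σ.1 k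
            = (∑ k ∈ range (n σ.1), Polynomial.C (cA σ.1 k) * pch σ.1 k)
              - ∑ k ∈ range (n σ.1),
                  Polynomial.C (qq.eval (z ⟨σ.1, k⟩) * w ⟨σ.1, k⟩) * pch σ.1 k := by
          rw [← Finset.sum_sub_distrib]
          exact Finset.sum_congr rfl fun k _ => by rw [Polynomial.C_sub]; ring
        rw [e, ← hcA σ.1, hABi]
        simp only [hB]
        rw [sub_self]
      have h2 := expansion_unique (pch σ.1) (hpchmon σ.1) (hpchdeg σ.1) (n σ.1) _ h1 σ.2 hσ2
      rw [hv]
      simp only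
      rw [eq_div_iff (hwne σ hσ)]
      exact (sub_eq_zero.mp h2).symm
    · intro hq i
      rw [hcA i, hB]
      apply Finset.sum_congr rfl
      intro k hk
      have hkT : (⟨i, k⟩ : (_ : Fin p) × ℕ) ∈ T := (hmemT _).mpr (mem_range.mp hk)
      rw [hq _ hkT, hv]
      simp only
      rw [div_mul_cancel₀ _ (hwne _ hkT)]
  -- the interpolating polynomial
  have hS0 : 0 < S := by
    rw [hS]
    exact Finset.sum_pos (fun i _ => hn i) ⟨⟨0, hp⟩, Finset.mem_univ _⟩
  set q0 : Polynomial ℂ := Lagrange.interpolate T z v with hq0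
  have hq0deg : q0.degree < (S : WithBot ℕ) := by
    have := Lagrange.degree_interpolate_lt v hzinj
    rwa [hcardT, Nat.cast_withBot] at this
  have hq0nat : q0.natDegree ≤ S - 1 := by
    rcases eq_or_ne q0 0 with h | h
    · rw [h, Polynomial.natDegree_zero]; omega
    · have h2 := hq0deg
      rw [Polynomial.degree_eq_natDegree h] at h2
      have h3 : q0.natDegree < S := by exact_mod_cast h2
      omega
  have hq0vals : ∀ σ ∈ T, q0.eval (z σ) = v σ := fun σ hσ =>
    Lagrange.eval_interpolate_at_node v hzinj hσ
  refine ⟨q0, ⟨hq0nat, (hmainiff q0).mpr ((hvaliff q0).mpr hq0vals)⟩, ?_⟩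
  intro q' hq'
  obtain ⟨hq'deg, hq'eq⟩ := hq'
  have hvals := (hvaliff q').mp ((hmainiff q').mp hq'eq)
  have hq'd : q'.degree < (#T : WithBot ℕ) := by
    rw [hcardT]
    rcases eq_or_ne q' 0 with h | h
    · rw [h, Polynomial.degree_zero]; exact WithBot.bot_lt_coe _
    · rw [Polynomial.degree_eq_natDegree h]
      exact_mod_cast lt_of_le_of_lt hq'deg (by omega)
  have := Lagrange.eq_interpolate_of_eval_eq v hzinj (by rwa [Nat.cast_withBot] at hq'd) hvals
  rw [hq0]
  exact this
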